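/- Let A ∈ ℝ^{n×m} have rank s and suppose every square minor of every matrix in Q(A) has the same sign as the corresponding minor of A (equivalently, the weighted bipartite graph of A is 2-odd). Then for all k ≥ 1, every matrix of the form A_1A_2^T A_3⋯ with each A_i ∈ Q(A) (k factors, alternating transposes) has rank s; and every such product with an even number 2k of factors (hence square) has exactly n − s zero eigenvalues. -/

import Mathlib

open Matrix

/-- The qualitative class of a real matrix: matrices with the same sign pattern. -/
def Qual {n m : ℕ} (A : Matrix (Fin n) (Fin m) ℝ) : Set (Matrix (Fin n) (Fin m) ℝ) :=
  {B | ∀ i j, Real.sign (B i j) = Real.sign (A i j)}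

/-- The alternating product `B 0 * (B 1)ᵀ * B 2 * (B 3)ᵀ * ⋯` with `2 * j` factors. -/
def altProdEven {n m : ℕ} (B : ℕ → Matrix (Fin n) (Fin m) ℝ) : ℕ → Matrix (Fin n) (Fin n) ℝ
  | 0 => 1
  | j + 1 => altProdEven B j * B (2 * j) * (B (2 * j + 1))ᵀ

section Auxiliary

open Finset Equiv

/-! ### Cauchy–Binet -/

instance {r N : ℕ} : DecidablePred (fun f : Fin r → Fin N => StrictMono f) := fun f =>
  decidable_of_iff (∀ a b : Fin r, a < b → f a < f b)
    ⟨fun h _ _ hab => h _ _ hab, fun h a b hab => h hab⟩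

/-- The equivalence between (strictly monotone map, permutation) pairs and injective maps. -/
noncomputable def monoPermEquiv (r N : ℕ) :
    ({f : Fin r → Fin N // StrictMono f} × Equiv.Perm (Fin r)) ≃
      {p : Fin r → Fin N // Function.Injective p} :=
  Equiv.ofBijective
    (fun gs => ⟨gs.1.1 ∘ gs.2, gs.1.2.injective.comp gs.2.injective⟩) <| by
  constructor
  · rintro ⟨⟨γ₁, h₁⟩, σ₁⟩ ⟨⟨γ₂, h₂⟩, σ₂⟩ h
    have hco : γ₁ ∘ σ₁ = γ₂ ∘ σ₂ := congrArg Subtype.val h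
    have hrange : Set.range γ₁ = Set.range γ₂ := by
      rw [← σ₁.surjective.range_comp γ₁, ← σ₂.surjective.range_comp γ₂, hco]
    have hcard : (Finset.image γ₁ univ).card = r := by
      rw [Finset.card_image_of_injective _ h₁.injective, card_univ, Fintype.card_fin]
    have e₁ : γ₁ = (Finset.image γ₁ univ).orderEmbOfFin hcard :=
      Finset.orderEmbOfFin_unique hcard (fun i => Finset.mem_image_of_mem _ (mem_univ i)) h₁
    have e₂ : γ₂ = (Finset.image γ₁ univ).orderEmbOfFin hcard := by
      refine Finset.orderEmbOfFin_unique hcard (fun i => ?_) h₂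
      have hmem : γ₂ i ∈ Set.range γ₁ := hrange ▸ Set.mem_range_self i
      obtain ⟨j, hj⟩ := hmem
      exact hj ▸ Finset.mem_image_of_mem _ (mem_univ j)
    have hγ : γ₁ = γ₂ := e₁.trans e₂.symm
    subst hγ
    have hσ : σ₁ = σ₂ := by
      ext i
      exact congrArg Fin.val (h₁.injective (congrFun hco i))
    simp [hσ]
  · rintro ⟨p, hp⟩
    set s : Finset (Fin N) := Finset.image p univ with hs
    have hcard : s.card = r := by
      rw [hs, Finset.card_image_of_injective _ hp, card_univ, Fintype.card_fin]
    have hmem : ∀ i, p i ∈ s := fun i => Finset.mem_image_of_mem _ (mem_univ i)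
    set σ' : Fin r → Fin r := fun i => (s.orderIsoOfFin hcard).symm ⟨p i, hmem i⟩ with hσ'
    have hinj : Function.Injective σ' := by
      intro i j hij
      apply hp
      have := congrArg (fun x => ((s.orderIsoOfFin hcard) x : Fin N)) hij
      simpa [hσ'] using this
    have hbij : Function.Bijective σ' := (Finite.injective_iff_bijective).1 hinj
    refine ⟨⟨⟨fun i => s.orderEmbOfFin hcard i, (s.orderEmbOfFin hcard).strictMono⟩,
      Equiv.ofBijective σ' hbij⟩, ?_⟩
    refine Subtype.ext (funext fun i => ?_)
    show s.orderEmbOfFin hcard (σ' i) = p i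
    rw [hσ', ← Finset.coe_orderIsoOfFin_apply]
    simp

/-- The Cauchy–Binet formula. -/
theorem cauchy_binet {r N : ℕ} (X : Matrix (Fin r) (Fin N) ℝ) (Y : Matrix (Fin N) (Fin r) ℝ) :
    det (X * Y) = ∑ γ : {f : Fin r → Fin N // StrictMono f},
      det (X.submatrix id γ.1) * det (Y.submatrix γ.1 id) := by
  have hA : det (X * Y) =
      ∑ p : Fin r → Fin N, det (X.submatrix id p) * ∏ i, Y (p i) i := by
    simp only [det_apply', mul_apply, prod_univ_sum, mul_sum, Fintype.piFinset_univ]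
    rw [Finset.sum_comm]
    refine Finset.sum_congr rfl fun p _ => ?_
    rw [Finset.sum_mul]
    refine Finset.sum_congr rfl fun σ _ => ?_
    rw [prod_mul_distrib]
    simp [submatrix_apply, mul_assoc]
  have hzero : ∀ p : Fin r → Fin N, ¬ Function.Injective p →
      det (X.submatrix id p) * ∏ i, Y (p i) i = 0 := by
    intro p hp
    obtain ⟨i, j, hij, hne⟩ : ∃ i j, p i = p j ∧ i ≠ j := by
      rw [Function.Injective] at hp
      push_neg at hp
      obtain ⟨i, j, h1, h2⟩ := hp
      exact ⟨i, j, h1, h2⟩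
    rw [det_zero_of_column_eq hne (by intro k; simp [submatrix_apply, hij]), zero_mul]
  have hB : det (X * Y) = ∑ q : {p : Fin r → Fin N // Function.Injective p},
      det (X.submatrix id q.1) * ∏ i, Y (q.1 i) i := by
    rw [hA, ← Finset.sum_filter_of_ne (fun p _ h => by
      by_contra hc; exact h (hzero p hc))]
    exact Finset.sum_subtype _ (by simp) _
  rw [hB, ← Fintype.sum_equiv (monoPermEquiv r N)
    (fun gs => det (X.submatrix id (gs.1.1 ∘ gs.2)) * ∏ i, Y ((gs.1.1 ∘ gs.2) i) i)
    (fun q => det (X.submatrix id q.1) * ∏ i, Y (q.1 i) i)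
    (fun gs => by beta_reduce; rw [show ((monoPermEquiv r N gs :
      {p : Fin r → Fin N // Function.Injective p}) : Fin r → Fin N) = gs.1.1 ∘ gs.2 from rfl])]
  rw [Fintype.sum_prod_type]
  refine Finset.sum_congr rfl fun γ _ => ?_
  have hXperm : ∀ σ : Equiv.Perm (Fin r),
      det (X.submatrix id (γ.1 ∘ σ)) = Equiv.Perm.sign σ * det (X.submatrix id γ.1) := by
    intro σ
    have : X.submatrix id (γ.1 ∘ σ) = (X.submatrix id γ.1).submatrix id σ := rfl
    rw [this, det_permute']
  have hdetY : det (Y.submatrix γ.1 id) =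
      ∑ σ : Equiv.Perm (Fin r), (Equiv.Perm.sign σ : ℝ) * ∏ i, Y (γ.1 (σ i)) i := by
    rw [det_apply']
    refine Finset.sum_congr rfl fun σ _ => ?_
    congr 1
  calc ∑ σ : Equiv.Perm (Fin r), det (X.submatrix id (γ.1 ∘ σ)) * ∏ i, Y ((γ.1 ∘ σ) i) i
      = ∑ σ : Equiv.Perm (Fin r),
        det (X.submatrix id γ.1) * ((Equiv.Perm.sign σ : ℝ) * ∏ i, Y (γ.1 (σ i)) i) := by
        refine Finset.sum_congr rfl fun σ _ => ?_
        rw [hXperm σ]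
        ring_nf
        rfl
    _ = det (X.submatrix id γ.1) * det (Y.submatrix γ.1 id) := by
        rw [← Finset.mul_sum, hdetY]

/-! ### Rank and minors -/

theorem submatrix_eq_mul {p q r : ℕ} (M : Matrix (Fin p) (Fin q) ℝ) (α : Fin r → Fin p)
    (β : Fin r → Fin q) :
    M.submatrix α β =
      (1 : Matrix (Fin p) (Fin p) ℝ).submatrix α id *
        (M * (1 : Matrix (Fin q) (Fin q) ℝ).submatrix id β) := by
  ext i j
  simp [mul_apply, one_apply, Finset.sum_ite_eq, Finset.sum_ite_eq']

/-- if a minor is nonzero, the rank is at least the size of the minor -/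
theorem rank_ge_of_minor {p q r : ℕ} (M : Matrix (Fin p) (Fin q) ℝ) (α : Fin r → Fin p)
    (β : Fin r → Fin q) (h : det (M.submatrix α β) ≠ 0) : r ≤ M.rank := by
  have hunit : IsUnit (M.submatrix α β) := by
    rw [Matrix.isUnit_iff_isUnit_det]
    exact isUnit_iff_ne_zero.2 h
  have h1 : (M.submatrix α β).rank = r := by
    rw [Matrix.rank_of_isUnit _ hunit, Fintype.card_fin]
  rw [← h1, submatrix_eq_mul M α β]
  exact le_trans (Matrix.rank_mul_le_right _ _) (Matrix.rank_mul_le_left _ _)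

/-- there is a set of `rank` rows which is linearly independent -/
theorem exists_rows_linearIndependent {p q : ℕ} (M : Matrix (Fin p) (Fin q) ℝ) :
    ∃ t : Finset (Fin p), t.card = M.rank ∧ LinearIndependent ℝ (fun i : t => M i.1) := by
  classical
  have hr : M.rank = Module.finrank ℝ (Submodule.span ℝ (Set.range M)) :=
    Matrix.rank_eq_finrank_span_row M
  obtain ⟨b, hbsub, hbspan, hbind⟩ := exists_linearIndependent ℝ (Set.range M)
  haveI : Fintype b := (hbind.setFinite).fintype
  have hcardb : Module.finrank ℝ (Submodule.span ℝ b) = b.toFinset.card :=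
    finrank_span_set_eq_card hbind
  have hchoice : ∀ v : b, ∃ i : Fin p, M i = v := fun v => hbsub v.2
  choose idx hidx using hchoice
  have hidxinj : Function.Injective idx := by
    intro v w hvw
    apply Subtype.ext
    rw [← hidx v, ← hidx w, hvw]
  refine ⟨Finset.image idx univ, ?_, ?_⟩
  · rw [Finset.card_image_of_injective _ hidxinj, card_univ, hr, ← hbspan, hcardb,
      Set.toFinset_card]
  · have hmem : ∀ i : (Finset.image idx univ : Finset (Fin p)), M i.1 ∈ b := by
      rintro ⟨i, hi⟩
      obtain ⟨v, -, rfl⟩ := Finset.mem_image.1 hi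
      rw [hidx v]
      exact v.2
    have hginj : Function.Injective
        (fun i : {x // x ∈ Finset.image idx univ} => (⟨M i.1, hmem i⟩ : b)) := by
      rintro ⟨i, hi⟩ ⟨j, hj⟩ hij
      obtain ⟨v, -, rfl⟩ := Finset.mem_image.1 hi
      obtain ⟨w, -, rfl⟩ := Finset.mem_image.1 hj
      have : M (idx v) = M (idx w) := congrArg Subtype.val hij
      rw [hidx v, hidx w] at this
      have : v = w := Subtype.ext this
      simp [this]
    exact hbind.comp _ hginj

/-- there is a nonzero minor of size `rank`, realized on strictly monotone index maps. -/
theorem exists_minor_rank {p q : ℕ} (M : Matrix (Fin p) (Fin q) ℝ) :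
    ∃ (α : Fin M.rank → Fin p) (β : Fin M.rank → Fin q),
      StrictMono α ∧ StrictMono β ∧ det (M.submatrix α β) ≠ 0 := by
  classical
  obtain ⟨t, htcard, htind⟩ := exists_rows_linearIndependent M
  set α : Fin M.rank → Fin p := fun i => t.orderEmbOfFin htcard i with hα
  have hiso : ∀ i, (⟨α i, Finset.orderEmbOfFin_mem t htcard i⟩ : t) = t.orderIsoOfFin htcard i :=
    fun i => Subtype.ext (Finset.coe_orderIsoOfFin_apply t htcard i).symm
  have hrows : LinearIndependent ℝ (fun i : Fin M.rank => M (α i)) := by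
    have : (fun i : Fin M.rank => M (α i)) =
        (fun i : t => M i.1) ∘ (fun i => (t.orderIsoOfFin htcard) i) := by
      funext i
      simp only [Function.comp_apply, ← hiso i]
    rw [this]
    exact htind.comp _ (fun i j hij => by
      have := congrArg (fun x => ((t.orderIsoOfFin htcard).symm x)) hij
      simpa using this)
  set M₁ := M.submatrix α id with hM₁
  have hrankM₁ : M₁.rank = M.rank := by
    rw [Matrix.rank_eq_finrank_span_row M₁]
    have : Set.range M₁.row = Set.range fun i : Fin M.rank => M (α i) := by
      rw [hM₁]; rfl
    rw [this, finrank_span_eq_card hrows, Fintype.card_fin]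
  obtain ⟨u, hucard', huind⟩ := exists_rows_linearIndependent M₁ᵀ
  have hucard : u.card = M.rank := by rw [hucard', Matrix.rank_transpose, hrankM₁]
  set β : Fin M.rank → Fin q := fun j => u.orderEmbOfFin hucard j with hβ
  have hcols : LinearIndependent ℝ (fun j : Fin M.rank => M₁ᵀ (β j)) := by
    have hisou : ∀ i, (⟨β i, Finset.orderEmbOfFin_mem u hucard i⟩ : u) =
        u.orderIsoOfFin hucard i :=
      fun i => Subtype.ext (Finset.coe_orderIsoOfFin_apply u hucard i).symm
    have : (fun j : Fin M.rank => M₁ᵀ (β j)) =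
        (fun i : u => M₁ᵀ i.1) ∘ (fun i => (u.orderIsoOfFin hucard) i) := by
      funext i
      simp only [Function.comp_apply, ← hisou i]
    rw [this]
    exact huind.comp _ (fun i j hij => by
      have := congrArg (fun x => ((u.orderIsoOfFin hucard).symm x)) hij
      simpa using this)
  refine ⟨α, β, (t.orderEmbOfFin htcard).strictMono, (u.orderEmbOfFin hucard).strictMono, ?_⟩
  intro hdet
  obtain ⟨v, hv0, hvmul⟩ := (Matrix.exists_mulVec_eq_zero_iff).2 hdet
  have hall : ∀ j, v j = 0 := by
    rw [Fintype.linearIndependent_iff] at hcols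
    refine hcols v ?_
    funext i
    simpa [Matrix.mulVec, dotProduct, Matrix.submatrix_apply, hM₁, mul_comm] using
      congrFun hvmul i
  exact hv0 (funext hall)

/-! ### Sign lemmas -/

theorem sign_mul_nonneg {x y : ℝ} (h : Real.sign x = Real.sign y) : 0 ≤ x * y := by
  rcases lt_trichotomy x 0 with hx | hx | hx
  · rcases lt_trichotomy y 0 with hy | hy | hy
    · exact le_of_lt (mul_pos_of_neg_of_neg hx hy)
    · simp [hy]
    · exfalso; rw [Real.sign_of_neg hx, Real.sign_of_pos hy] at h; norm_num at h
  · simp [hx]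
  · rcases lt_trichotomy y 0 with hy | hy | hy
    · exfalso; rw [Real.sign_of_pos hx, Real.sign_of_neg hy] at h; norm_num at h
    · simp [hy]
    · exact le_of_lt (mul_pos hx hy)

theorem sign_mul_pos {x y : ℝ} (h : Real.sign x = Real.sign y) (hx : x ≠ 0) (hy : y ≠ 0) :
    0 < x * y := lt_of_le_of_ne (sign_mul_nonneg h) (Ne.symm (mul_ne_zero hx hy))

/-! ### Kernel lemmas -/

theorem ker_eq_of_rank_eq {a b c : ℕ} (M : Matrix (Fin a) (Fin b) ℝ) (N : Matrix (Fin b) (Fin c) ℝ)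
    (h : (M * N).rank = N.rank) :
    ∀ v, (M * N).mulVec v = 0 → N.mulVec v = 0 := by
  have hle : LinearMap.ker N.mulVecLin ≤ LinearMap.ker (M * N).mulVecLin := by
    intro v hv
    rw [LinearMap.mem_ker, mulVecLin_apply] at hv ⊢
    rw [← mulVec_mulVec, hv, mulVec_zero]
  have h1 := LinearMap.finrank_range_add_finrank_ker (M * N).mulVecLin
  have h2 := LinearMap.finrank_range_add_finrank_ker N.mulVecLin
  have hMN : Module.finrank ℝ (LinearMap.range (M * N).mulVecLin) = (M * N).rank := rfl
  have hN : Module.finrank ℝ (LinearMap.range N.mulVecLin) = N.rank := rfl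
  rw [hMN] at h1
  rw [hN] at h2
  have heq : LinearMap.ker N.mulVecLin = LinearMap.ker (M * N).mulVecLin :=
    Submodule.eq_of_le_of_finrank_le hle (by omega)
  intro v hv
  have hv' : v ∈ LinearMap.ker (M * N).mulVecLin := by
    rw [LinearMap.mem_ker, mulVecLin_apply]; exact hv
  rw [← heq] at hv'
  simpa [LinearMap.mem_ker, mulVecLin_apply] using hv'

theorem rank_le_of_ker {a b c : ℕ} (M : Matrix (Fin a) (Fin b) ℝ) (N : Matrix (Fin c) (Fin b) ℝ)
    (h : ∀ v, M.mulVec v = 0 → N.mulVec v = 0) : N.rank ≤ M.rank := by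
  have hle : LinearMap.ker M.mulVecLin ≤ LinearMap.ker N.mulVecLin := by
    intro v hv
    rw [LinearMap.mem_ker, mulVecLin_apply] at hv ⊢
    exact h v hv
  have hm := Submodule.finrank_mono hle
  have h1 := LinearMap.finrank_range_add_finrank_ker M.mulVecLin
  have h2 := LinearMap.finrank_range_add_finrank_ker N.mulVecLin
  have hM : Module.finrank ℝ (LinearMap.range M.mulVecLin) = M.rank := rfl
  have hN : Module.finrank ℝ (LinearMap.range N.mulVecLin) = N.rank := rfl
  rw [hM] at h1
  rw [hN] at h2
  omega

/-! ### altProdEven lemmas -/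

theorem altProdEven_congr {n m : ℕ} {Bs Cs : ℕ → Matrix (Fin n) (Fin m) ℝ} :
    ∀ {j : ℕ}, (∀ i, i < 2 * j → Bs i = Cs i) → altProdEven Bs j = altProdEven Cs j
  | 0, _ => rfl
  | j + 1, h => by
    show altProdEven Bs j * Bs (2 * j) * (Bs (2 * j + 1))ᵀ =
      altProdEven Cs j * Cs (2 * j) * (Cs (2 * j + 1))ᵀ
    rw [altProdEven_congr (fun i hi => h i (by omega)), h (2 * j) (by omega),
      h (2 * j + 1) (by omega)]

theorem altProdEven_add {n m : ℕ} (Bs : ℕ → Matrix (Fin n) (Fin m) ℝ) (a : ℕ) :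
    ∀ b : ℕ, altProdEven Bs (a + b) = altProdEven Bs a * altProdEven (fun i => Bs (2 * a + i)) b
  | 0 => by
    show altProdEven Bs a = altProdEven Bs a * 1
    rw [mul_one]
  | b + 1 => by
    show altProdEven Bs (a + b) * Bs (2 * (a + b)) * (Bs (2 * (a + b) + 1))ᵀ =
      altProdEven Bs a * (altProdEven (fun i => Bs (2 * a + i)) b * Bs (2 * a + 2 * b) *
        (Bs (2 * a + (2 * b + 1)))ᵀ)
    rw [altProdEven_add Bs a b]
    have e1 : 2 * (a + b) = 2 * a + 2 * b := by ring
    rw [e1, show 2 * a + 2 * b + 1 = 2 * a + (2 * b + 1) from by omega,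
      Matrix.mul_assoc, Matrix.mul_assoc, Matrix.mul_assoc]

/-! ### Positivity of special minors of pair products -/

theorem qual_pair_pos {n m r : ℕ} (A : Matrix (Fin n) (Fin m) ℝ)
    (hsigned : ∀ A₁ ∈ Qual A, ∀ (r : ℕ) (α : Fin r → Fin n) (β : Fin r → Fin m),
      Function.Injective α → Function.Injective β →
      Real.sign ((A₁.submatrix α β).det) = Real.sign ((A.submatrix α β).det))
    {α : Fin r → Fin n} {β : Fin r → Fin m} (hα : Function.Injective α) (hβ : StrictMono β)
    (hne : det (A.submatrix α β) ≠ 0)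
    {X Y : Matrix (Fin n) (Fin m) ℝ} (hX : X ∈ Qual A) (hY : Y ∈ Qual A) :
    0 < det ((X * Yᵀ).submatrix α α) := by
  have hfac : (X * Yᵀ).submatrix α α = (X.submatrix α id) * (Y.submatrix α id)ᵀ := by
    ext i j
    simp [mul_apply, submatrix_apply]
  have hterm : ∀ γ : {f : Fin r → Fin m // StrictMono f},
      det ((X.submatrix α id).submatrix id γ.1) *
        det (((Y.submatrix α id)ᵀ).submatrix γ.1 id) =
      det (X.submatrix α γ.1) * det (Y.submatrix α γ.1) := by
    intro γ
    have e1 : (X.submatrix α id).submatrix id γ.1 = X.submatrix α γ.1 := by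
      rw [submatrix_submatrix, Function.comp_id, Function.id_comp]
    have e2 : ((Y.submatrix α id)ᵀ).submatrix γ.1 id =
        ((Y.submatrix α id).submatrix id γ.1)ᵀ := rfl
    have e3 : (Y.submatrix α id).submatrix id γ.1 = Y.submatrix α γ.1 := by
      rw [submatrix_submatrix, Function.comp_id, Function.id_comp]
    rw [e1, e2, e3, det_transpose]
  have hzero : ∀ (Z : Matrix (Fin n) (Fin m) ℝ), Z ∈ Qual A →
      ∀ (γ : Fin r → Fin m), Function.Injective γ →
      det (A.submatrix α γ) ≠ 0 → det (Z.submatrix α γ) ≠ 0 := by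
    intro Z hZ γ hγ hAne h0
    apply hAne
    apply Real.sign_eq_zero_iff.1
    rw [← hsigned Z hZ r α γ hα hγ, h0, Real.sign_zero]
  rw [hfac, cauchy_binet]
  refine Finset.sum_pos' (fun γ _ => ?_) ⟨⟨β, hβ⟩, Finset.mem_univ _, ?_⟩
  · rw [hterm γ]
    have s1 := hsigned X hX r α γ.1 hα γ.2.injective
    have s2 := hsigned Y hY r α γ.1 hα γ.2.injective
    exact sign_mul_nonneg (s1.trans s2.symm)
  · rw [hterm ⟨β, hβ⟩]
    have s1 := hsigned X hX r α β hα hβ.injective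
    have s2 := hsigned Y hY r α β hα hβ.injective
    exact sign_mul_pos (s1.trans s2.symm) (hzero X hX β hβ.injective hne)
      (hzero Y hY β hβ.injective hne)

theorem qual_pair_pos' {n m r : ℕ} (A : Matrix (Fin n) (Fin m) ℝ)
    (hsigned : ∀ A₁ ∈ Qual A, ∀ (r : ℕ) (α : Fin r → Fin n) (β : Fin r → Fin m),
      Function.Injective α → Function.Injective β →
      Real.sign ((A₁.submatrix α β).det) = Real.sign ((A.submatrix α β).det))
    {α : Fin r → Fin n} {β : Fin r → Fin m} (hα : StrictMono α) (hβ : Function.Injective β)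
    (hne : det (A.submatrix α β) ≠ 0)
    {X Y : Matrix (Fin n) (Fin m) ℝ} (hX : X ∈ Qual A) (hY : Y ∈ Qual A) :
    0 < det ((Xᵀ * Y).submatrix β β) := by
  have hfac : (Xᵀ * Y).submatrix β β = (X.submatrix id β)ᵀ * (Y.submatrix id β) := by
    ext i j
    simp [mul_apply, submatrix_apply]
  have hterm : ∀ δ : {f : Fin r → Fin n // StrictMono f},
      det (((X.submatrix id β)ᵀ).submatrix id δ.1) *
        det ((Y.submatrix id β).submatrix δ.1 id) =
      det (X.submatrix δ.1 β) * det (Y.submatrix δ.1 β) := by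
    intro δ
    have e1 : ((X.submatrix id β)ᵀ).submatrix id δ.1 =
        ((X.submatrix id β).submatrix δ.1 id)ᵀ := rfl
    have e2 : (X.submatrix id β).submatrix δ.1 id = X.submatrix δ.1 β := by
      rw [submatrix_submatrix, Function.comp_id, Function.id_comp]
    have e3 : (Y.submatrix id β).submatrix δ.1 id = Y.submatrix δ.1 β := by
      rw [submatrix_submatrix, Function.comp_id, Function.id_comp]
    rw [e1, e2, e3, det_transpose]
  have hzero : ∀ (Z : Matrix (Fin n) (Fin m) ℝ), Z ∈ Qual A →
      ∀ (δ : Fin r → Fin n), Function.Injective δ →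
      det (A.submatrix δ β) ≠ 0 → det (Z.submatrix δ β) ≠ 0 := by
    intro Z hZ δ hδ hAne h0
    apply hAne
    apply Real.sign_eq_zero_iff.1
    rw [← hsigned Z hZ r δ β hδ hβ, h0, Real.sign_zero]
  rw [hfac, cauchy_binet]
  refine Finset.sum_pos' (fun δ _ => ?_) ⟨⟨α, hα⟩, Finset.mem_univ _, ?_⟩
  · rw [hterm δ]
    have s1 := hsigned X hX r δ.1 β δ.2.injective hβ
    have s2 := hsigned Y hY r δ.1 β δ.2.injective hβ
    exact sign_mul_nonneg (s1.trans s2.symm)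
  · rw [hterm ⟨α, hα⟩]
    have s1 := hsigned X hX r α β hα.injective hβ
    have s2 := hsigned Y hY r α β hα.injective hβ
    exact sign_mul_pos (s1.trans s2.symm) (hzero X hX α hα.injective hne)
      (hzero Y hY α hα.injective hne)

/-- matrices in the qualitative class have the same rank. -/
theorem qual_rank_eq {n m : ℕ} (A : Matrix (Fin n) (Fin m) ℝ)
    (hsigned : ∀ A₁ ∈ Qual A, ∀ (r : ℕ) (α : Fin r → Fin n) (β : Fin r → Fin m),
      Function.Injective α → Function.Injective β →
      Real.sign ((A₁.submatrix α β).det) = Real.sign ((A.submatrix α β).det))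
    {X : Matrix (Fin n) (Fin m) ℝ} (hX : X ∈ Qual A) : X.rank = A.rank := by
  apply le_antisymm
  · obtain ⟨α, β, hα, hβ, hne⟩ := exists_minor_rank X
    have hA : det (A.submatrix α β) ≠ 0 := by
      intro h0
      apply hne
      apply Real.sign_eq_zero_iff.1
      rw [hsigned X hX _ α β hα.injective hβ.injective, h0, Real.sign_zero]
    exact rank_ge_of_minor A α β hA
  · obtain ⟨α, β, hα, hβ, hne⟩ := exists_minor_rank A
    have hXne : det (X.submatrix α β) ≠ 0 := by
      intro h0
      apply hne
      apply Real.sign_eq_zero_iff.1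
      rw [← hsigned X hX _ α β hα.injective hβ.injective, h0, Real.sign_zero]
    exact rank_ge_of_minor X α β hXne

/-! ### The characteristic polynomial computation -/

theorem charpoly_rootMultiplicity_of_ker_sq {n : ℕ} (P : Matrix (Fin n) (Fin n) ℝ)
    (hker2 : ∀ v, P.mulVec (P.mulVec v) = 0 → P.mulVec v = 0) :
    Polynomial.rootMultiplicity (0 : ℝ) P.charpoly = n - P.rank := by
  classical
  set f : (Fin n → ℝ) →ₗ[ℝ] (Fin n → ℝ) := P.mulVecLin with hf
  set K : Submodule ℝ (Fin n → ℝ) := LinearMap.ker f with hK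
  set W : Submodule ℝ (Fin n → ℝ) := LinearMap.range f with hW
  have hdim : Module.finrank ℝ (Fin n → ℝ) = n := by
    rw [Module.finrank_fintype_fun_eq_card, Fintype.card_fin]
  have hWrank : Module.finrank ℝ W = P.rank := rfl
  have hrn : Module.finrank ℝ W + Module.finrank ℝ K = n := by
    have h0 := LinearMap.finrank_range_add_finrank_ker f
    rw [hdim] at h0
    exact h0
  have hKrank : Module.finrank ℝ K = n - P.rank := by omega
  have hdisj : Disjoint K W := by
    rw [Submodule.disjoint_def]
    intro x hxK hxW
    obtain ⟨v, rfl⟩ := hxW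
    have h1 : P.mulVec (P.mulVec v) = 0 := by
      have := (LinearMap.mem_ker).1 hxK
      simpa [hf, mulVecLin_apply, mulVec_mulVec] using this
    have h2 := hker2 v h1
    simp [hf, mulVecLin_apply, h2]
  have hcompl : IsCompl K W := by
    constructor
    · exact hdisj
    · rw [codisjoint_iff]
      apply Submodule.eq_top_of_finrank_eq
      have := Submodule.finrank_sup_add_finrank_inf_eq K W
      rw [hdisj.eq_bot, finrank_bot] at this
      omega
  set bK : Module.Basis (Fin (n - P.rank)) ℝ K := Module.finBasisOfFinrankEq ℝ K hKrank with hbK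
  set bW : Module.Basis (Fin P.rank) ℝ W := Module.finBasisOfFinrankEq ℝ W hWrank with hbW
  set e : (K × W) ≃ₗ[ℝ] (Fin n → ℝ) := Submodule.prodEquivOfIsCompl K W hcompl with he
  set b : Module.Basis (Fin (n - P.rank) ⊕ Fin P.rank) ℝ (Fin n → ℝ) := (bK.prod bW).map e with hb
  set M' := LinearMap.toMatrix b b f with hM'
  have hbinl : ∀ l, (b (Sum.inl l) : Fin n → ℝ) = (bK l : Fin n → ℝ) := by
    intro l
    rw [hb, Module.Basis.map_apply, Module.Basis.prod_apply]
    simp [he, Submodule.coe_prodEquivOfIsCompl']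
  have hbinr : ∀ l, (b (Sum.inr l) : Fin n → ℝ) = (bW l : Fin n → ℝ) := by
    intro l
    rw [hb, Module.Basis.map_apply, Module.Basis.prod_apply]
    simp [he, Submodule.coe_prodEquivOfIsCompl']
  have hreprW : ∀ (w : Fin n → ℝ), w ∈ W → ∀ i, b.repr w (Sum.inl i) = 0 := by
    intro w hw i
    rw [hb, Module.Basis.map_repr]
    simp only [LinearEquiv.trans_apply]
    rw [Module.Basis.prod_repr_inl]
    have : (e.symm w).1 = 0 :=
      (Submodule.prodEquivOfIsCompl_symm_apply_fst_eq_zero (h := hcompl)).2 hw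
    rw [this, map_zero]
    rfl
  have hcol0 : ∀ x l, M' x (Sum.inl l) = 0 := by
    intro x l
    rw [hM', LinearMap.toMatrix_apply]
    have hzero : f (b (Sum.inl l)) = 0 := by
      have hmem : (b (Sum.inl l) : Fin n → ℝ) ∈ K := by rw [hbinl]; exact (bK l).2
      exact (LinearMap.mem_ker).1 hmem
    rw [hzero, map_zero]
    rfl
  have hrow0 : ∀ i l, M' (Sum.inl i) (Sum.inr l) = 0 := by
    intro i l
    rw [hM', LinearMap.toMatrix_apply]
    exact hreprW _ (LinearMap.mem_range_self f _) i
  have hblock : M' = Matrix.fromBlocks 0 0 0 (M'.toBlocks₂₂) := by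
    ext x y
    rcases x with i | i <;> rcases y with l | l
    · simpa using hcol0 (Sum.inl i) l
    · simpa using hrow0 i l
    · simpa using hcol0 (Sum.inr i) l
    · simp [Matrix.toBlocks₂₂]
  set Q := M'.toBlocks₂₂ with hQ
  have hQdet : det Q ≠ 0 := by
    intro h0
    obtain ⟨w, hw0, hwmul⟩ := (Matrix.exists_mulVec_eq_zero_iff).2 h0
    set v : (Fin (n - P.rank) ⊕ Fin P.rank) → ℝ := Sum.elim 0 w with hv
    set x : Fin n → ℝ := b.equivFun.symm v with hx
    have hreprx : ⇑(b.repr x) = v := by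
      rw [← Module.Basis.equivFun_apply]
      exact b.equivFun.apply_symm_apply v
    have hx0 : x ≠ 0 := by
      intro h
      apply hw0
      funext l
      have : v (Sum.inr l) = 0 := by
        rw [← hreprx, h]
        simp
      simpa [hv] using this
    have hfx : f x = 0 := by
      have h3 := LinearMap.toMatrix_mulVec_repr b b f x
      rw [hreprx, ← hM'] at h3
      have h4 : M'.mulVec v = 0 := by
        rw [hblock, hv, Matrix.fromBlocks_mulVec]
        simp [hwmul]
      rw [h4] at h3
      have h5 : b.repr (f x) = 0 := by
        ext t
        have := congrFun h3.symm t
        simpa using this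
      exact (LinearEquiv.map_eq_zero_iff _).1 h5
    have hxW : x ∈ W := by
      have hxsum : x = ∑ i, v i • b i := by rw [hx, Module.Basis.equivFun_symm_apply]
      rw [hxsum]
      refine Submodule.sum_mem _ (fun i _ => ?_)
      rcases i with i | l
      · have : v (Sum.inl i) = 0 := rfl
        rw [this, zero_smul]
        exact Submodule.zero_mem _
      · refine Submodule.smul_mem _ _ ?_
        rw [hbinr l]
        exact (bW l).2
    have : x = 0 := (Submodule.disjoint_def.1 hdisj) x ((LinearMap.mem_ker).2 hfx) hxW
    exact hx0 this
  have hPf : LinearMap.toMatrix (Pi.basisFun ℝ (Fin n)) (Pi.basisFun ℝ (Fin n)) f = P := by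
    rw [LinearMap.toMatrix_eq_toMatrix']
    rw [show f = Matrix.toLin' P from (Matrix.toLin'_apply' P).symm]
    exact LinearMap.toMatrix'_toLin' P
  have hchar : P.charpoly = M'.charpoly := by
    have h1 : (LinearMap.toMatrix (Pi.basisFun ℝ (Fin n)) (Pi.basisFun ℝ (Fin n)) f).charpoly =
        f.charpoly := LinearMap.charpoly_toMatrix f _
    have h2 : M'.charpoly = f.charpoly := by rw [hM']; exact LinearMap.charpoly_toMatrix f b
    exact ((congrArg Matrix.charpoly hPf).symm.trans h1).trans h2.symm
  have hchar0 : Matrix.charpoly (0 : Matrix (Fin (n - P.rank)) (Fin (n - P.rank)) ℝ) =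
      Polynomial.X ^ (n - P.rank) := by
    have : charmatrix (0 : Matrix (Fin (n - P.rank)) (Fin (n - P.rank)) ℝ) =
        Matrix.diagonal (fun _ => (Polynomial.X : Polynomial ℝ)) := by
      ext i j
      by_cases h : i = j
      · subst h
        simp [charmatrix_apply_eq]
      · simp [charmatrix_apply_ne _ _ _ h, Matrix.diagonal_apply_ne _ h]
    rw [Matrix.charpoly, this, det_diagonal, Finset.prod_const, Finset.card_univ,
      Fintype.card_fin]
  have hcp : M'.charpoly = Polynomial.X ^ (n - P.rank) * Q.charpoly := by
    rw [show M'.charpoly = (charmatrix M').det from rfl, hblock, charmatrix_fromBlocks]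
    have hz : ((0 : Matrix (Fin (n - P.rank)) (Fin P.rank) ℝ)).map Polynomial.C = 0 := by
      ext i j; simp
    have hz' : ((0 : Matrix (Fin P.rank) (Fin (n - P.rank)) ℝ)).map Polynomial.C = 0 := by
      ext i j; simp
    rw [hz, hz', neg_zero, neg_zero, Matrix.det_fromBlocks_zero₂₁, ← hchar0]
    rfl
  have hQne : Q.charpoly ≠ 0 := (Matrix.charpoly_monic Q).ne_zero
  have hq0 : ¬ Q.charpoly.IsRoot 0 := by
    rw [Polynomial.IsRoot, ← Polynomial.coeff_zero_eq_eval_zero]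
    intro h0
    apply hQdet
    rw [Matrix.det_eq_sign_charpoly_coeff, h0, mul_zero]
  rw [hchar, hcp, Polynomial.rootMultiplicity_mul
    (mul_ne_zero (pow_ne_zero _ Polynomial.X_ne_zero) hQne)]
  have hXpow : (Polynomial.X : Polynomial ℝ) ^ (n - P.rank) =
      (Polynomial.X - Polynomial.C 0) ^ (n - P.rank) := by rw [map_zero, sub_zero]
  rw [hXpow, Polynomial.rootMultiplicity_X_sub_C_pow, Polynomial.rootMultiplicity_eq_zero hq0,
    add_zero]

end Auxiliary

/-- let `A` have rank `s`, and suppose every square minor of every matrix in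
`Q(A)` has the same sign as the corresponding minor of `A` (the matrix version of the
weighted bipartite graph of `A` being 2-odd).  Then every alternating product
`A₁ A₂ᵀ A₃ ⋯` of matrices from `Q(A)` has rank `s` (stated separately for an even number
`2j` and an odd number `2j + 1` of factors), and every such square product (an even number
of factors) has exactly `n - s` zero eigenvalues. -/
theorem rank_and_zero_eigenvalues_of_alt_products {n m s : ℕ}
    (A : Matrix (Fin n) (Fin m) ℝ) (hrank : A.rank = s)
    (hsigned : ∀ A₁ ∈ Qual A, ∀ (r : ℕ) (α : Fin r → Fin n) (β : Fin r → Fin m),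
      Function.Injective α → Function.Injective β →
      Real.sign ((A₁.submatrix α β).det) = Real.sign ((A.submatrix α β).det)) :
    ∀ Bs : ℕ → Matrix (Fin n) (Fin m) ℝ, (∀ i, Bs i ∈ Qual A) →
      (∀ j : ℕ, 1 ≤ j → (altProdEven Bs j).rank = s) ∧
      (∀ j : ℕ, (altProdEven Bs j * Bs (2 * j)).rank = s) ∧
      (∀ j : ℕ, 1 ≤ j →
        Polynomial.rootMultiplicity (0 : ℝ) (altProdEven Bs j).charpoly = n - s) := by
  subst hrank
  obtain ⟨α, β, hα, hβ, hne⟩ := exists_minor_rank A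
  -- general facts
  have hQrank : ∀ {X : Matrix (Fin n) (Fin m) ℝ}, X ∈ Qual A → X.rank = A.rank :=
    fun hX => qual_rank_eq A hsigned hX
  have hpairXY : ∀ {X Y : Matrix (Fin n) (Fin m) ℝ}, X ∈ Qual A → Y ∈ Qual A →
      (X * Yᵀ).rank = A.rank := by
    intro X Y hX hY
    apply le_antisymm
    · calc (X * Yᵀ).rank ≤ X.rank := Matrix.rank_mul_le_left X Yᵀ
        _ = A.rank := hQrank hX
    · exact rank_ge_of_minor _ α α
        (ne_of_gt (qual_pair_pos A hsigned hα.injective hβ hne hX hY))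
  have hpairTXY : ∀ {X Y : Matrix (Fin n) (Fin m) ℝ}, X ∈ Qual A → Y ∈ Qual A →
      (Xᵀ * Y).rank = A.rank := by
    intro X Y hX hY
    apply le_antisymm
    · calc (Xᵀ * Y).rank ≤ Y.rank := Matrix.rank_mul_le_right Xᵀ Y
        _ = A.rank := hQrank hY
    · exact rank_ge_of_minor _ β β
        (ne_of_gt (qual_pair_pos' A hsigned hα hβ.injective hne hX hY))
  -- the main kernel induction, for an arbitrary admissible sequence
  have KER : ∀ (Cs : ℕ → Matrix (Fin n) (Fin m) ℝ), (∀ i, Cs i ∈ Qual A) →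
      ∀ j : ℕ, ∀ v, (altProdEven Cs j * Cs (2 * j)).mulVec v = 0 → (Cs (2 * j)).mulVec v = 0 := by
    intro Cs hCs j
    induction j with
    | zero =>
      intro v hv
      rw [show altProdEven Cs 0 = 1 from rfl, Matrix.one_mul] at hv
      exact hv
    | succ j ih =>
      intro v hv
      have hassoc : altProdEven Cs (j + 1) * Cs (2 * (j + 1)) =
          (altProdEven Cs j * Cs (2 * j)) * ((Cs (2 * j + 1))ᵀ * Cs (2 * (j + 1))) := by
        rw [show altProdEven Cs (j + 1) =
          altProdEven Cs j * Cs (2 * j) * (Cs (2 * j + 1))ᵀ from rfl, Matrix.mul_assoc]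
      rw [hassoc, ← mulVec_mulVec] at hv
      have h1 := ih _ hv
      rw [mulVec_mulVec] at h1
      rw [show (Cs (2 * j) * ((Cs (2 * j + 1))ᵀ * Cs (2 * (j + 1)))) =
        (Cs (2 * j) * (Cs (2 * j + 1))ᵀ) * Cs (2 * (j + 1)) from (Matrix.mul_assoc _ _ _).symm,
        ← mulVec_mulVec] at h1
      have h2 := ker_eq_of_rank_eq (Cs (2 * j)) ((Cs (2 * j + 1))ᵀ)
        (by rw [hpairXY (hCs (2 * j)) (hCs (2 * j + 1)), Matrix.rank_transpose,
          hQrank (hCs (2 * j + 1))]) _ h1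
      rw [mulVec_mulVec] at h2
      exact ker_eq_of_rank_eq ((Cs (2 * j + 1))ᵀ) (Cs (2 * (j + 1)))
        (by rw [hpairTXY (hCs (2 * j + 1)) (hCs (2 * (j + 1))), hQrank (hCs (2 * (j + 1)))]) _ h2
  -- kernel property of the even products themselves
  have KERP : ∀ (Cs : ℕ → Matrix (Fin n) (Fin m) ℝ), (∀ i, Cs i ∈ Qual A) →
      ∀ j : ℕ, ∀ v, (altProdEven Cs (j + 1)).mulVec v = 0 →
        ((Cs (2 * j + 1))ᵀ).mulVec v = 0 := by
    intro Cs hCs j v hv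
    rw [show altProdEven Cs (j + 1) =
      (altProdEven Cs j * Cs (2 * j)) * (Cs (2 * j + 1))ᵀ from rfl, ← mulVec_mulVec] at hv
    have h1 := KER Cs hCs j _ hv
    rw [mulVec_mulVec] at h1
    exact ker_eq_of_rank_eq (Cs (2 * j)) ((Cs (2 * j + 1))ᵀ)
      (by rw [hpairXY (hCs (2 * j)) (hCs (2 * j + 1)), Matrix.rank_transpose,
        hQrank (hCs (2 * j + 1))]) _ h1
  -- rank conclusions for an arbitrary admissible sequence
  have RANKODD : ∀ (Cs : ℕ → Matrix (Fin n) (Fin m) ℝ), (∀ i, Cs i ∈ Qual A) →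
      ∀ j : ℕ, (altProdEven Cs j * Cs (2 * j)).rank = A.rank := by
    intro Cs hCs j
    apply le_antisymm
    · calc (altProdEven Cs j * Cs (2 * j)).rank ≤ (Cs (2 * j)).rank :=
        Matrix.rank_mul_le_right _ _
        _ = A.rank := hQrank (hCs (2 * j))
    · rw [← hQrank (hCs (2 * j))]
      exact rank_le_of_ker _ _ (KER Cs hCs j)
  have RANKEVEN : ∀ (Cs : ℕ → Matrix (Fin n) (Fin m) ℝ), (∀ i, Cs i ∈ Qual A) →
      ∀ j : ℕ, 1 ≤ j → (altProdEven Cs j).rank = A.rank := by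
    intro Cs hCs j hj
    obtain ⟨j', rfl⟩ : ∃ j', j = j' + 1 := ⟨j - 1, by omega⟩
    apply le_antisymm
    · have h1 : (altProdEven Cs (j' + 1)).rank ≤ ((Cs (2 * j' + 1))ᵀ).rank := by
        rw [show altProdEven Cs (j' + 1) =
          (altProdEven Cs j' * Cs (2 * j')) * (Cs (2 * j' + 1))ᵀ from rfl]
        exact Matrix.rank_mul_le_right _ _
      rw [Matrix.rank_transpose, hQrank (hCs (2 * j' + 1))] at h1
      exact h1
    · have : ((Cs (2 * j' + 1))ᵀ).rank ≤ (altProdEven Cs (j' + 1)).rank :=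
        rank_le_of_ker _ _ (KERP Cs hCs j')
      rw [Matrix.rank_transpose, hQrank (hCs (2 * j' + 1))] at this
      exact this
  intro Bs hBs
  refine ⟨RANKEVEN Bs hBs, RANKODD Bs hBs, ?_⟩
  intro j hj
  -- the squared product is also an alternating product
  set Cs : ℕ → Matrix (Fin n) (Fin m) ℝ := fun i => Bs (i % (2 * j)) with hCs
  have hCsQ : ∀ i, Cs i ∈ Qual A := fun i => hBs _
  have hsq : altProdEven Cs (j + j) = altProdEven Bs j * altProdEven Bs j := by
    rw [altProdEven_add Cs j j]
    congr 1
    · refine altProdEven_congr (fun i hi => ?_)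
      rw [hCs]
      simp only []
      rw [Nat.mod_eq_of_lt hi]
    · refine altProdEven_congr (fun i hi => ?_)
      rw [hCs]
      simp only []
      rw [Nat.add_mod_left, Nat.mod_eq_of_lt hi]
  have hranksq : (altProdEven Bs j * altProdEven Bs j).rank = A.rank := by
    rw [← hsq]
    exact RANKEVEN Cs hCsQ (j + j) (by omega)
  have hker2 : ∀ v, (altProdEven Bs j).mulVec ((altProdEven Bs j).mulVec v) = 0 →
      (altProdEven Bs j).mulVec v = 0 := by
    intro v hv
    refine ker_eq_of_rank_eq (altProdEven Bs j) (altProdEven Bs j) ?_ v ?_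
    · rw [hranksq, RANKEVEN Bs hBs j hj]
    · rw [← mulVec_mulVec]
      exact hv
  have := charpoly_rootMultiplicity_of_ker_sq (altProdEven Bs j) hker2
  rw [this, RANKEVEN Bs hBs j hj]
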